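/- There exists a probability measure μ on ℝ² with moment generating function G and domain V = {u : G(u) < ∞} ⊇ (ℝ × (−1,1)) ∪ {(0,1)}, and a continuous curve c : [0,1] → V with c(1) = (0,1), such that G(c(1)) < ∞ but lim_{t↑1} G(c(t)) = ∞. -/

import Mathlib

open MeasureTheory Real Set Filter Topology
open scoped ENNReal

noncomputable def bnW (n : ℕ) : ℝ≥0∞ := ENNReal.ofReal (Real.exp (-(n:ℝ)) / ((n:ℝ)+1)^2)

noncomputable def bnNu : Measure (ℝ × ℝ) :=
  Measure.sum (fun n : ℕ => bnW n • Measure.dirac (Real.sqrt n, (n:ℝ)))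

noncomputable def bnM : ℝ≥0∞ := ∑' n, bnW n

noncomputable def bnT (u : ℝ × ℝ) (n : ℕ) : ℝ :=
  Real.exp (u.1 * Real.sqrt n + (u.2 - 1) * n) / ((n:ℝ)+1)^2

lemma bn_summable : Summable (fun n : ℕ => 1 / ((n:ℝ)+1)^2) := by
  have h := (summable_nat_add_iff (f := fun n : ℕ => 1 / (n:ℝ)^2) 1).2
    (Real.summable_one_div_nat_pow.2 one_lt_two)
  simpa [add_comm] using h

lemma bn_tsum_lt_top {g : ℕ → ℝ} (C : ℝ) (hC : 0 ≤ C)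
    (hg : ∀ n, g n ≤ C * (1 / ((n:ℝ)+1)^2)) :
    ∑' n, ENNReal.ofReal (g n) < ⊤ := by
  calc ∑' n, ENNReal.ofReal (g n)
      ≤ ∑' n : ℕ, ENNReal.ofReal (C * (1 / ((n:ℝ)+1)^2)) :=
        ENNReal.tsum_le_tsum fun n => ENNReal.ofReal_le_ofReal (hg n)
    _ = ENNReal.ofReal (∑' n : ℕ, C * (1 / ((n:ℝ)+1)^2)) :=
        (ENNReal.ofReal_tsum_of_nonneg (fun n => by positivity) (bn_summable.mul_left C)).symm
    _ < ⊤ := ENNReal.ofReal_lt_top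

lemma bnM_ne_top : bnM ≠ ⊤ := by
  refine (bn_tsum_lt_top 1 zero_le_one fun n => ?_).ne
  rw [one_mul]
  gcongr
  exact Real.exp_le_one_iff.2 (neg_nonpos.2 (Nat.cast_nonneg n))

lemma bnM_ne_zero : bnM ≠ 0 := by
  have h0 : (1:ℝ≥0∞) ≤ bnW 0 := by
    simp [bnW]
  have h1 : (1:ℝ≥0∞) ≤ bnM := le_trans h0 (ENNReal.le_tsum 0)
  intro h
  simp [h] at h1

lemma bnNu_lintegral (f : ℝ × ℝ → ℝ≥0∞) :
    ∫⁻ x, f x ∂bnNu = ∑' n, bnW n * f (Real.sqrt n, (n:ℝ)) := by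
  simp [bnNu, lintegral_sum_measure, lintegral_smul_measure, lintegral_dirac]

lemma bnNu_univ : bnNu univ = bnM := by
  simp [bnNu, Measure.sum_apply _ MeasurableSet.univ, bnM]

lemma bn_term (u : ℝ × ℝ) (n : ℕ) :
    bnW n * ENNReal.ofReal (Real.exp (u.1 * Real.sqrt n + u.2 * n)) =
      ENNReal.ofReal (bnT u n) := by
  rw [bnW, ← ENNReal.ofReal_mul (by positivity)]
  congr 1
  rw [bnT, div_mul_eq_mul_div, ← Real.exp_add]
  have : -(n:ℝ) + (u.1 * Real.sqrt n + u.2 * n) = u.1 * Real.sqrt n + (u.2 - 1) * n := by ring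
  rw [this]

lemma bn_bounded_of_lt_one (u : ℝ × ℝ) (hu : u.2 < 1) (n : ℕ) :
    u.1 * Real.sqrt n + (u.2 - 1) * n ≤ u.1^2 / (4 * (1 - u.2)) := by
  have hε : 0 < 1 - u.2 := by linarith
  have hx : (0:ℝ) ≤ Real.sqrt n := Real.sqrt_nonneg _
  have hn : ((n:ℝ)) = Real.sqrt n ^ 2 := (Real.sq_sqrt (Nat.cast_nonneg n)).symm
  have key : ∀ x : ℝ, u.1 * x + (u.2 - 1) * x^2 ≤ u.1^2 / (4 * (1 - u.2)) := by
    intro x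
    rw [le_div_iff₀ (by positivity)]
    nlinarith [sq_nonneg (2 * (1 - u.2) * x - u.1)]
  have h2 := key (Real.sqrt n)
  rwa [← hn] at h2


lemma bn_key (t : ℝ) (ht : t ∈ Ico (0:ℝ) 1) :
    Real.exp (3 * (Real.sqrt (1-t))⁻¹ - 1) / (9 * ((Real.sqrt (1-t))⁻¹)^6)
      ≤ bnT (4 * Real.sqrt (Real.sqrt (1-t)), t) ⌈((Real.sqrt (1-t))⁻¹)^3⌉₊ := by
  set a := Real.sqrt (1-t) with ha_def
  have ha : 0 < a := Real.sqrt_pos.2 (by linarith [ht.2])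
  have ha1 : a ≤ 1 := Real.sqrt_le_one.2 (by linarith [ht.1])
  set b := a⁻¹ with hb_def
  have hb : 0 < b := inv_pos.2 ha
  have hb1 : 1 ≤ b := (one_le_inv₀ ha).2 ha1
  set n := ⌈b^3⌉₊ with hn_def
  have hn1 : b^3 ≤ (n:ℝ) := Nat.le_ceil _
  have hn2 : (n:ℝ) < b^3 + 1 := Nat.ceil_lt_add_one (by positivity)
  have ha2 : a^2 = 1 - t := Real.sq_sqrt (by linarith [ht.2])
  have hab3 : a * b^3 = b^2 := by
    rw [hb_def, inv_pow, inv_pow]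
    field_simp
  have hab2 : a^2 * b^3 = b := by
    rw [hb_def, inv_pow]
    field_simp
  rw [bnT]
  have hE : 3 * b - 1 ≤ 4 * Real.sqrt a * Real.sqrt n + (t - 1) * n := by
    have h4 : b ≤ Real.sqrt a * Real.sqrt n := by
      rw [← Real.sqrt_mul ha.le]
      calc b = Real.sqrt (b^2) := (Real.sqrt_sq hb.le).symm
        _ = Real.sqrt (a * b^3) := by rw [hab3]
        _ ≤ Real.sqrt (a * n) := Real.sqrt_le_sqrt (by nlinarith)
    have h5 : (1 - t) * n ≤ b + 1 := by
      rw [← ha2]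
      nlinarith [sq_nonneg a]
    nlinarith
  have hD : ((n:ℝ) + 1)^2 ≤ 9 * b^6 := by
    have h6 : (n:ℝ) + 1 ≤ 3 * b^3 := by nlinarith
    nlinarith [Nat.cast_nonneg (α := ℝ) n]
  exact div_le_div₀ (Real.exp_pos _).le (Real.exp_le_exp.2 hE) (by positivity) hD

theorem exists_mgf_finite_with_blowup_curve :
    ∃ μ : Measure (ℝ × ℝ), IsProbabilityMeasure μ ∧
      ∀ G : ℝ × ℝ → ℝ≥0∞,
        (∀ u, G u = ∫⁻ ξ, ENNReal.ofReal (Real.exp (u.1 * ξ.1 + u.2 * ξ.2)) ∂μ) →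
        ((univ ×ˢ Ioo (-1 : ℝ) 1) ∪ {((0 : ℝ), (1 : ℝ))} ⊆ {u | G u < ⊤}) ∧
        ∃ c : ℝ → ℝ × ℝ, ContinuousOn c (Icc 0 1) ∧
          (∀ t ∈ Icc (0 : ℝ) 1, G (c t) < ⊤) ∧
          c 1 = (0, 1) ∧ G (c 1) < ⊤ ∧
          Tendsto (fun t => G (c t)) (𝓝[Ico (0 : ℝ) 1] 1) (𝓝 ⊤) := by
  refine ⟨bnM⁻¹ • bnNu, ⟨by
    rw [Measure.smul_apply, smul_eq_mul, bnNu_univ, ENNReal.inv_mul_cancel bnM_ne_zero bnM_ne_top]⟩,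
    fun G hG => ?_⟩
  have hGeq : ∀ u, G u = bnM⁻¹ * ∑' n, ENNReal.ofReal (bnT u n) := by
    intro u
    rw [hG u, lintegral_smul_measure, bnNu_lintegral]
    simp only [bn_term, smul_eq_mul]
  -- finiteness from a uniform exponent bound
  have hfin : ∀ u : ℝ × ℝ, (∃ K, ∀ n : ℕ, u.1 * Real.sqrt n + (u.2 - 1) * n ≤ K) →
      G u < ⊤ := by
    rintro u ⟨K, hK⟩
    rw [hGeq u]
    refine ENNReal.mul_lt_top (ENNReal.inv_lt_top.2 ?_) ?_
    · exact pos_iff_ne_zero.2 bnM_ne_zero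
    · refine bn_tsum_lt_top (Real.exp K) (Real.exp_nonneg K) fun n => ?_
      rw [bnT, mul_one_div]
      gcongr
      exact hK n
  have hfin_strip : ∀ u : ℝ × ℝ, u.2 < 1 → G u < ⊤ := fun u hu =>
    hfin u ⟨u.1^2 / (4 * (1 - u.2)), bn_bounded_of_lt_one u hu⟩
  have hfin_pt : G (0, 1) < ⊤ := hfin (0, 1) ⟨0, fun n => by norm_num⟩
  constructor
  · rintro u (⟨-, hu2⟩ | hu)
    · exact hfin_strip u hu2.2
    · rw [mem_singleton_iff] at hu; subst hu; exact hfin_pt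
  · have hc1 : (fun t : ℝ => ((4 * Real.sqrt (Real.sqrt (1 - t)), t) : ℝ × ℝ)) 1 = (0, 1) := by
      norm_num
    refine ⟨fun t => (4 * Real.sqrt (Real.sqrt (1 - t)), t), ?_, ?_, ?_, ?_, ?_⟩
    · exact (Continuous.prodMk
        (continuous_const.mul (Real.continuous_sqrt.comp
          (Real.continuous_sqrt.comp (continuous_const.sub continuous_id))))
        continuous_id).continuousOn
    · intro t ht
      rcases eq_or_lt_of_le ht.2 with h1 | h1
      · rw [show t = 1 from h1, hc1]; exact hfin_pt
      · exact hfin_strip _ h1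
    · exact hc1
    · rw [hc1]; exact hfin_pt
    · -- the blow-up along the curve
      have h1 : Tendsto (fun t : ℝ => Real.sqrt (1 - t)) (𝓝[Ico (0:ℝ) 1] 1) (𝓝[>] 0) := by
        rw [tendsto_nhdsWithin_iff]
        constructor
        · exact ((Real.continuous_sqrt.comp
            (continuous_const.sub continuous_id)).tendsto' 1 0 (by simp)).mono_left
            nhdsWithin_le_nhds
        · exact eventually_mem_nhdsWithin.mono fun t ht =>
            Real.sqrt_pos.2 (by linarith [ht.2])
      have hA : Tendsto (fun t : ℝ => (Real.sqrt (1 - t))⁻¹) (𝓝[Ico (0:ℝ) 1] 1) atTop :=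
        tendsto_inv_nhdsGT_zero.comp h1
      have hL : Tendsto (fun x : ℝ => Real.exp (3 * x - 1) / (9 * x^6)) atTop atTop := by
        have base := ((Real.tendsto_exp_div_pow_atTop 6).comp
          (tendsto_id.const_mul_atTop (by norm_num : (0:ℝ) < 3))).const_mul_atTop
          (by positivity : (0:ℝ) < 81 / Real.exp 1)
        refine base.congr' ?_
        filter_upwards [eventually_ge_atTop (1:ℝ)] with x hx
        have hx0 : x ≠ 0 := by linarith
        simp only [Function.comp, id_eq]
        rw [Real.exp_sub]
        have he : Real.exp 1 ≠ 0 := (Real.exp_pos 1).ne'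
        field_simp
        ring
      have htop : Tendsto (fun t : ℝ =>
          ENNReal.ofReal (Real.exp (3 * (Real.sqrt (1-t))⁻¹ - 1) /
            (9 * ((Real.sqrt (1-t))⁻¹)^6))) (𝓝[Ico (0:ℝ) 1] 1) (𝓝 ⊤) :=
        ENNReal.tendsto_ofReal_nhds_top.2 (hL.comp hA)
      have hmul := ENNReal.Tendsto.const_mul (a := bnM⁻¹) htop (Or.inl ENNReal.top_ne_zero)
      rw [ENNReal.mul_top (ENNReal.inv_ne_zero.2 bnM_ne_top)] at hmul
      refine tendsto_nhds_top_mono hmul ?_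
      filter_upwards [eventually_mem_nhdsWithin] with t ht
      rw [hGeq]
      refine mul_le_mul_right ?_ _
      exact le_trans (ENNReal.ofReal_le_ofReal (bn_key t ht))
        (ENNReal.le_tsum ⌈((Real.sqrt (1-t))⁻¹)^3⌉₊)
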